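/- There exist a real number d > 1 and three open balls in Euclidean 3-space with centers on the prolate ellipsoid E_d = {p : (p 0)²/d² + (p 1)² + (p 2)² = 1}, which are pairwise non-overlapping (distance between centers at least the sum of radii), none of which contains the origin, and which generate the shadow at the origin: every line through the origin intersects at least one of the three balls. -/

import Mathlib

open Metric

private lemma dist3 (p q : EuclideanSpace ℝ (Fin 3)) :
    dist p q = Real.sqrt ((p 0 - q 0)^2 + (p 1 - q 1)^2 + (p 2 - q 2)^2) := by
  rw [EuclideanSpace.dist_eq, Fin.sum_univ_three]
  simp [Real.dist_eq, sq_abs]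

private lemma cover_aux (a v : EuclideanSpace ℝ (Fin 3)) (r : ℝ) (hr : 0 < r)
    (hn : 0 < v 0 ^ 2 + v 1 ^ 2 + v 2 ^ 2)
    (hkey : (a 0 ^ 2 + a 1 ^ 2 + a 2 ^ 2 - r ^ 2) * (v 0 ^ 2 + v 1 ^ 2 + v 2 ^ 2)
      < (a 0 * v 0 + a 1 * v 1 + a 2 * v 2) ^ 2) :
    ∃ t : ℝ, t • v ∈ Metric.ball a r := by
  refine ⟨(a 0 * v 0 + a 1 * v 1 + a 2 * v 2) / (v 0 ^ 2 + v 1 ^ 2 + v 2 ^ 2), ?_⟩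
  rw [mem_ball, dist3]
  simp only [PiLp.smul_apply, smul_eq_mul]
  refine (Real.sqrt_lt' hr).mpr ?_
  set s := a 0 * v 0 + a 1 * v 1 + a 2 * v 2 with hs
  set n := v 0 ^ 2 + v 1 ^ 2 + v 2 ^ 2 with hn'
  have expand : (s / n * v 0 - a 0)^2 + (s / n * v 1 - a 1)^2 + (s / n * v 2 - a 2)^2
      = (a 0 ^ 2 + a 1 ^ 2 + a 2 ^ 2) - s ^ 2 / n := by
    field_simp
    ring
  rw [expand]
  have hdiv : (a 0 ^ 2 + a 1 ^ 2 + a 2 ^ 2) - r ^ 2 < s ^ 2 / n := (lt_div_iff₀ hn).mpr hkey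
  linarith

/-- There exist a prolate ellipsoid and three pairwise non-overlapping open balls
with centers on it, none containing the origin, generating the shadow at the origin. -/
theorem exists_ellipsoid_three_open_balls_shadow :
    ∃ (d : ℝ), 1 < d ∧
      ∃ (a : Fin 3 → EuclideanSpace ℝ (Fin 3)) (r : Fin 3 → ℝ),
        (∀ i, (a i 0) ^ 2 / d ^ 2 + (a i 1) ^ 2 + (a i 2) ^ 2 = 1) ∧
        (∀ i, 0 < r i) ∧
        (∀ i j, i ≠ j → r i + r j ≤ dist (a i) (a j)) ∧
        (∀ i, (0 : EuclideanSpace ℝ (Fin 3)) ∉ Metric.ball (a i) (r i)) ∧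
        (∀ v : EuclideanSpace ℝ (Fin 3), v ≠ 0 →
          ∃ (i : Fin 3) (t : ℝ), t • v ∈ Metric.ball (a i) (r i)) := by
  refine ⟨20, by norm_num,
    ![(!₂[20,0,0] : EuclideanSpace ℝ (Fin 3)), (!₂[0,1,0] : EuclideanSpace ℝ (Fin 3)),
      (!₂[0,0,1] : EuclideanSpace ℝ (Fin 3))], ![37/2, 1, 41/100], ?_, ?_, ?_, ?_, ?_⟩
  · intro i; fin_cases i <;> norm_num [Matrix.cons_val_two]
  · intro i; fin_cases i <;> norm_num
  · intro i j hij
    fin_cases i <;> fin_cases j <;> first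
      | exact absurd rfl hij
      | (simp [dist3]
         norm_num
         nlinarith [Real.sq_sqrt (show (0:ℝ) ≤ 401 by norm_num),
           Real.sqrt_nonneg (401 : ℝ),
           Real.sq_sqrt (show (0:ℝ) ≤ 2 by norm_num),
           Real.sqrt_nonneg (2 : ℝ)])
  · intro i
    fin_cases i <;> simp [mem_ball, dist3] <;> norm_num
  · intro v hv
    have hcoord : v 0 ≠ 0 ∨ v 1 ≠ 0 ∨ v 2 ≠ 0 := by
      by_contra hc
      push_neg at hc
      apply hv
      ext i
      fin_cases i <;> simp [hc.1, hc.2.1, hc.2.2]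
    by_cases hy0 : v 1 ≠ 0
    · -- ball 2, center (0,1,0), radius 1
      have hy2 : 0 < v 1 ^ 2 := (sq_nonneg _).lt_of_ne' (pow_ne_zero 2 hy0)
      have hn : (0:ℝ) < v 0 ^ 2 + v 1 ^ 2 + v 2 ^ 2 := by
        nlinarith [sq_nonneg (v 0), sq_nonneg (v 2)]
      refine ⟨1, ?_⟩
      have := cover_aux (!₂[0,1,0] : EuclideanSpace ℝ (Fin 3)) v 1 one_pos hn ?_
      · simpa using this
      · simp
        nlinarith [sq_nonneg (v 0), sq_nonneg (v 2)]
    · push_neg at hy0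
      have hxz : v 0 ≠ 0 ∨ v 2 ≠ 0 := by
        rcases hcoord with h | h | h
        · exact Or.inl h
        · exact absurd hy0 h
        · exact Or.inr h
      have hn : (0:ℝ) < v 0 ^ 2 + v 1 ^ 2 + v 2 ^ 2 := by
        rcases hxz with h | h
        · have : 0 < v 0 ^ 2 := (sq_nonneg _).lt_of_ne' (pow_ne_zero 2 h)
          nlinarith [sq_nonneg (v 1), sq_nonneg (v 2)]
        · have : 0 < v 2 ^ 2 := (sq_nonneg _).lt_of_ne' (pow_ne_zero 2 h)
          nlinarith [sq_nonneg (v 0), sq_nonneg (v 1)]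
      by_cases hH : (231/4 : ℝ) * (v 0 ^ 2 + v 1 ^ 2 + v 2 ^ 2) < 400 * v 0 ^ 2
      · -- ball 1, center (20,0,0), radius 37/2
        refine ⟨0, ?_⟩
        have := cover_aux (!₂[20,0,0] : EuclideanSpace ℝ (Fin 3)) v (37/2) (by norm_num) hn ?_
        · simpa using this
        · simp
          nlinarith
      · -- ball 3, center (0,0,1), radius 41/100
        push_neg at hH
        have hz0 : v 2 ≠ 0 := by
          rcases hxz with h | h
          · intro hz
            have hx2 : 0 < v 0 ^ 2 := (sq_nonneg _).lt_of_ne' (pow_ne_zero 2 h)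
            rw [hz] at hH
            nlinarith
          · exact h
        have hz2 : 0 < v 2 ^ 2 := (sq_nonneg _).lt_of_ne' (pow_ne_zero 2 hz0)
        refine ⟨2, ?_⟩
        have := cover_aux (!₂[0,0,1] : EuclideanSpace ℝ (Fin 3)) v (41/100) (by norm_num) hn ?_
        · simpa using this
        · simp
          rw [hy0] at hH ⊢
          nlinarith
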